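/- Let c ∈ (0,1) with c ≠ 1/2, let α ∈ (0,1), and let (X_n)_{n≥1} be i.i.d. Bernoulli(c). For t ≥ 1 let ĉ_t := (1/t)·∑_{i=1}^t X_i, and define the Chernoff stopping time τ := inf{ t ≥ 2 : t · d(ĉ_t, 1/2) > log(2t/α) }, where by convention d(0, 1/2) := log 2 and d(1, 1/2) := log 2. Then the probability that the final decision is wrong satisfies P( τ < ∞ and 𝟙(ĉ_τ > 1/2) ≠ 𝟙(c > 1/2) ) ≤ α. -/

import Mathlib

open MeasureTheory ProbabilityTheory
open scoped ENNReal

/-- KL divergence between Bernoulli(p) and Bernoulli(q) (natural logarithm).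
Note that with Lean's conventions `klBer 0 (1/2) = klBer 1 (1/2) = Real.log 2`,
matching the paper's convention `d(0,1/2) = d(1,1/2) = log 2`. -/
noncomputable def klBer (p q : ℝ) : ℝ :=
  p * Real.log (p / q) + (1 - p) * Real.log ((1 - p) / (1 - q))

/-- Bernoulli(p) distribution on `ℝ` (mass `p` at `1` and `1-p` at `0`). -/
noncomputable def bern (p : ℝ) : MeasureTheory.Measure ℝ :=
  (ENNReal.ofReal p) • MeasureTheory.Measure.dirac 1 +
    (ENNReal.ofReal (1 - p)) • MeasureTheory.Measure.dirac 0

/-- Empirical mean `ĉ_t = (1/t) ∑_{i=1}^t X_i`. -/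
noncomputable def empMean {Ω : Type*} (X : ℕ → Ω → ℝ) (t : ℕ) (ω : Ω) : ℝ :=
  (1 / (t : ℝ)) * ∑ i ∈ Finset.Icc 1 t, X i ω

/-- Chernoff stopping time `τ = inf{ t ≥ 2 : t d(ĉ_t, 1/2) > log (2t/α) }`
(`⊤` if no such `t` exists). -/
noncomputable def chernoffTau {Ω : Type*} (X : ℕ → Ω → ℝ) (α : ℝ) (ω : Ω) : ℕ∞ :=
  sInf {t : ℕ∞ | ∃ n : ℕ, t = (n : ℕ∞) ∧ 2 ≤ n ∧
    Real.log (2 * n / α) < (n : ℝ) * klBer (empMean X n ω) (1/2)}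


namespace ChernoffLemma2


/-- real weight `1/((n+1) C(n,k))`. -/
noncomputable def wr (n k : ℕ) : ℝ := (((n+1) * n.choose k : ℕ) : ℝ)⁻¹

lemma wr_pos {n k : ℕ} (hk : k ≤ n) : 0 < wr n k := by
  have h : 0 < (n+1) * n.choose k := Nat.mul_pos (Nat.succ_pos n) (Nat.choose_pos hk)
  unfold wr
  positivity

lemma wr_flow {n k : ℕ} (hk : k ≤ n) :
    wr (n+1) (k+1) + wr (n+1) k = wr n k := by
  have h1 : (n+1) * n.choose k = (n+1).choose (k+1) * (k+1) :=
    Nat.add_one_mul_choose_eq n k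
  have h2 : (n+1).choose (k+1) * (k+1) = (n+1).choose k * (n+1-k) :=
    Nat.choose_succ_right_eq (n+1) k
  have ha : (0:ℝ) < ((n+1).choose (k+1) : ℝ) :=
    Nat.cast_pos.mpr (Nat.choose_pos (by omega))
  have hb : (0:ℝ) < ((n+1).choose k : ℝ) :=
    Nat.cast_pos.mpr (Nat.choose_pos (by omega))
  have hM : (0:ℝ) < (((n+1) * n.choose k : ℕ) : ℝ) :=
    Nat.cast_pos.mpr (Nat.mul_pos (Nat.succ_pos n) (Nat.choose_pos hk))
  have h1' : (((n+1) * n.choose k : ℕ) : ℝ) = ((n+1).choose (k+1) : ℝ) * (k+1) := by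
    exact_mod_cast congrArg (Nat.cast : ℕ → ℝ) h1
  have h2' : ((n+1).choose (k+1) : ℝ) * (k+1) = ((n+1).choose k : ℝ) * ((n:ℝ)+1-k) := by
    have := congrArg (Nat.cast : ℕ → ℝ) h2
    push_cast [Nat.cast_sub (by omega : k ≤ n+1)] at this
    linarith
  unfold wr
  push_cast at h1' h2' hM ⊢
  have e1 : ((n:ℝ) + 1 + 1) * ((n + 1).choose (k + 1) : ℝ) ≠ 0 := by positivity
  have e2 : ((n:ℝ) + 1 + 1) * ((n + 1).choose k : ℝ) ≠ 0 := by positivity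
  have e3 : ((n:ℝ) + 1) * (n.choose k : ℝ) ≠ 0 := by nlinarith
  have hk1 : (k:ℝ) + 1 ≠ 0 := by positivity
  have hkn : (k:ℝ) ≤ n := by exact_mod_cast hk
  have hB2 : (n:ℝ) + 1 - k ≠ 0 := ne_of_gt (by linarith)
  have hn2 : (n:ℝ) + 1 + 1 ≠ 0 := by positivity
  have hAi : ((n+1).choose (k+1) : ℝ)⁻¹ = ((k:ℝ)+1) * (((n:ℝ)+1) * (n.choose k : ℝ))⁻¹ := by
    rw [h1', mul_inv, mul_comm ((k:ℝ)+1), mul_assoc, inv_mul_cancel₀ hk1, mul_one]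
  have hBi : ((n+1).choose k : ℝ)⁻¹ = ((n:ℝ)+1-k) * (((n:ℝ)+1) * (n.choose k : ℝ))⁻¹ := by
    rw [h1'.trans h2', mul_inv, mul_comm ((n:ℝ)+1-k), mul_assoc, inv_mul_cancel₀ hB2, mul_one]
  have hnn := mul_inv_cancel₀ hn2
  simp only [mul_inv] at hAi hBi ⊢
  linear_combination ((n:ℝ)+1+1)⁻¹ * hAi + ((n:ℝ)+1+1)⁻¹ * hBi
    + ((n:ℝ)+1)⁻¹ * (n.choose k : ℝ)⁻¹ * hnn



/-- weight in `ℝ≥0∞`. -/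
noncomputable def wgt (n k : ℕ) : ℝ≥0∞ := ENNReal.ofReal (wr n k)

lemma wgt_flow {n k : ℕ} (hk : k ≤ n) :
    wgt (n+1) (k+1) + wgt (n+1) k = wgt n k := by
  unfold wgt
  rw [← ENNReal.ofReal_add (le_of_lt (wr_pos (by omega)))
    (le_of_lt (wr_pos (by omega))), wr_flow hk]

/-- number of `true`s. -/
def cnt {n : ℕ} (v : Fin n → Bool) : ℕ := ∑ i, if v i then 1 else 0

lemma cnt_le {n : ℕ} (v : Fin n → Bool) : cnt v ≤ n := by
  unfold cnt
  calc (∑ i, if v i then 1 else 0) ≤ ∑ (_i : Fin n), 1 :=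
        Finset.sum_le_sum (fun i _ => by split <;> omega)
    _ = n := by simp

lemma cnt_snoc {n : ℕ} (v : Fin n → Bool) (b : Bool) :
    cnt (Fin.snoc v b) = cnt v + if b then 1 else 0 := by
  unfold cnt
  rw [Fin.sum_univ_castSucc]
  simp


open Finset in
lemma desc_sum (n : ℕ) (N : ℕ) (h : n ≤ N) (v : Fin n → Bool) :
    ∑ u ∈ Finset.univ.filter (fun u : Fin N → Bool => u ∘ Fin.castLE h = v),
      wgt N (cnt u) = wgt n (cnt v) := by
  induction N, h using Nat.le_induction with
  | base =>
    have : ∀ u : Fin n → Bool, u ∘ Fin.castLE (le_refl n) = u := by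
      intro u; funext i; simp [Fin.castLE]
    rw [show (Finset.univ.filter (fun u : Fin n → Bool => u ∘ Fin.castLE (le_refl n) = v))
        = {v} by ext u; simp [this]]
    simp
  | succ N hN ih =>
    classical
    rw [Finset.sum_filter]
    rw [← Equiv.sum_comp (Fin.snocEquiv (fun _ => Bool))
      (fun u : Fin (N+1) → Bool => if u ∘ Fin.castLE (by omega) = v then wgt (N+1) (cnt u) else 0)]
    rw [Fintype.sum_prod_type]
    have key : ∀ (b : Bool) (w : Fin N → Bool),
        (Fin.snocEquiv (fun _ => Bool) (b, w)) ∘ Fin.castLE (by omega : n ≤ N + 1)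
          = w ∘ Fin.castLE hN := by
      intro b w
      funext i
      have : (Fin.castLE (by omega : n ≤ N+1) i) = Fin.castSucc (Fin.castLE hN i) := by
        apply Fin.ext; simp
      simp only [Fin.snocEquiv, Equiv.coe_fn_mk, Function.comp_apply, this, Fin.snoc_castSucc]
    calc ∑ b : Bool, ∑ w : Fin N → Bool,
          (if (Fin.snocEquiv (fun _ => Bool) (b, w)) ∘ Fin.castLE (by omega) = v
            then wgt (N+1) (cnt (Fin.snocEquiv (fun _ => Bool) (b, w))) else 0)
        = ∑ b : Bool, ∑ w : Fin N → Bool,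
          (if w ∘ Fin.castLE hN = v then wgt (N+1) (cnt w + if b then 1 else 0) else 0) := by
          apply Finset.sum_congr rfl; intro b _
          apply Finset.sum_congr rfl; intro w _
          rw [key b w]
          have he : (Fin.snocEquiv (fun _ => Bool)) (b,w) = Fin.snoc w b := rfl
          rw [he, cnt_snoc]
      _ = ∑ w : Fin N → Bool,
          (if w ∘ Fin.castLE hN = v then wgt N (cnt w) else 0) := by
          rw [Fintype.sum_bool, ← Finset.sum_add_distrib]
          apply Finset.sum_congr rfl; intro w _
          by_cases hw : w ∘ Fin.castLE hN = v
          · simp only [hw, if_true]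
            exact wgt_flow (cnt_le w)
          · simp [hw]
      _ = wgt n (cnt v) := by rw [← Finset.sum_filter]; exact ih

lemma total_sum (N : ℕ) : ∑ u : Fin N → Bool, wgt N (cnt u) = wgt 0 0 := by
  classical
  have := desc_sum 0 N (Nat.zero_le N) (fun i => i.elim0)
  have hfil : (Finset.univ.filter
      (fun u : Fin N → Bool => u ∘ Fin.castLE (Nat.zero_le N) = fun i => i.elim0))
      = Finset.univ := by
    ext u; simp only [Finset.mem_filter, Finset.mem_univ, true_and, iff_true]
    funext i; exact i.elim0
  rw [hfil] at this
  rw [this]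
  have h0 : cnt (fun i : Fin 0 => i.elim0) = 0 := by simp [cnt]
  rw [h0]

open Finset in
lemma kraft (N : ℕ) (Bad : ∀ n : ℕ, Finset (Fin n → Bool))
    (hpf : ∀ m n (hmn : m < n) (v : Fin m → Bool) (w : Fin n → Bool),
        v ∈ Bad m → w ∈ Bad n → w ∘ Fin.castLE hmn.le ≠ v) :
    ∑ n ∈ Finset.range (N+1), ∑ v ∈ Bad n, wgt n (cnt v) ≤ wgt 0 0 := by
  classical
  -- descendant sets
  set D : ((n : ℕ) × (Fin n → Bool)) → Finset (Fin N → Bool) :=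
    fun p => Finset.univ.filter
      (fun u => ∃ h : p.1 ≤ N, u ∘ Fin.castLE h = p.2) with hD
  set S : Finset ((n : ℕ) × (Fin n → Bool)) := (Finset.range (N+1)).sigma Bad with hS
  have hrw : ∀ p ∈ S, ∑ u ∈ D p, wgt N (cnt u) = wgt p.1 (cnt p.2) := by
    rintro ⟨n, v⟩ hp
    have hn : n ≤ N := by
      have := (Finset.mem_sigma.mp hp).1
      simp only [Finset.mem_range] at this; omega
    have : D ⟨n, v⟩ = Finset.univ.filter (fun u : Fin N → Bool => u ∘ Fin.castLE hn = v) := by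
      ext u
      simp only [hD, Finset.mem_filter, Finset.mem_univ, true_and]
      constructor
      · rintro ⟨h, hu⟩; exact hu
      · intro hu; exact ⟨hn, hu⟩
    rw [this]
    exact desc_sum n N hn v
  have hdisj : (S : Set ((n : ℕ) × (Fin n → Bool))).PairwiseDisjoint D := by
    rintro ⟨m, v⟩ hv ⟨n, w⟩ hw hne
    simp only [Finset.disjoint_left]
    intro u hu hu'
    simp only [hD, Finset.mem_filter, Finset.mem_univ, true_and] at hu hu'
    obtain ⟨hm, huv⟩ := hu
    obtain ⟨hn, huw⟩ := hu'
    have hvB : v ∈ Bad m := (Finset.mem_sigma.mp hv).2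
    have hwB : w ∈ Bad n := (Finset.mem_sigma.mp hw).2
    rcases lt_trichotomy m n with hlt | heq | hgt
    · refine hpf m n hlt v w hvB hwB ?_
      funext i
      have hcast : Fin.castLE hn (Fin.castLE hlt.le i) = Fin.castLE hm i := by
        apply Fin.ext; simp
      calc (w ∘ Fin.castLE hlt.le) i = u (Fin.castLE hn (Fin.castLE hlt.le i)) :=
            (congrFun huw (Fin.castLE hlt.le i)).symm
        _ = u (Fin.castLE hm i) := by rw [hcast]
        _ = v i := congrFun huv i
    · subst heq
      apply hne
      have : v = w := by rw [← huv, ← huw]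
      simp [this]
    · refine hpf n m hgt w v hwB hvB ?_
      funext i
      have hcast : Fin.castLE hm (Fin.castLE hgt.le i) = Fin.castLE hn i := by
        apply Fin.ext; simp
      calc (v ∘ Fin.castLE hgt.le) i = u (Fin.castLE hm (Fin.castLE hgt.le i)) :=
            (congrFun huv (Fin.castLE hgt.le i)).symm
        _ = u (Fin.castLE hn i) := by rw [hcast]
        _ = w i := congrFun huw i
  calc ∑ n ∈ Finset.range (N+1), ∑ v ∈ Bad n, wgt n (cnt v)
      = ∑ p ∈ S, wgt p.1 (cnt p.2) := by rw [hS, Finset.sum_sigma]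
    _ = ∑ p ∈ S, ∑ u ∈ D p, wgt N (cnt u) := (Finset.sum_congr rfl (fun p hp => (hrw p hp).symm))
    _ = ∑ u ∈ S.biUnion D, wgt N (cnt u) := (Finset.sum_biUnion hdisj).symm
    _ ≤ ∑ u : Fin N → Bool, wgt N (cnt u) :=
        Finset.sum_le_sum_of_subset (Finset.subset_univ _)
    _ = wgt 0 0 := total_sum N

/-- decomposition of KL around 1/2 -/
lemma kl_decomp {x c : ℝ} (hc0 : 0 < c) (hc1 : c < 1) :
    klBer x c = klBer x (1/2)
      + (x * Real.log (1/(2*c)) + (1-x) * Real.log (1/(2*(1-c)))) := by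
  have hc1' : (0:ℝ) < 1 - c := by linarith
  have h2 : Real.log (1/2) = -Real.log 2 := by rw [one_div, Real.log_inv]
  have l3 : Real.log (1/(2*c)) = -(Real.log 2 + Real.log c) := by
    rw [one_div, Real.log_inv, Real.log_mul two_ne_zero (ne_of_gt hc0)]
  have l4 : Real.log (1/(2*(1-c))) = -(Real.log 2 + Real.log (1-c)) := by
    rw [one_div, Real.log_inv, Real.log_mul two_ne_zero (ne_of_gt hc1')]
  have hA : x * Real.log (x / c) = x * Real.log (x / (1/2)) + x * Real.log (1/(2*c)) := by
    rcases eq_or_ne x 0 with hx | hx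
    · simp [hx]
    · rw [Real.log_div hx (ne_of_gt hc0), Real.log_div hx (by norm_num), l3, h2]; ring
  have hB : (1-x) * Real.log ((1-x) / (1-c))
      = (1-x) * Real.log ((1-x) / (1-(1/2))) + (1-x) * Real.log (1/(2*(1-c))) := by
    rcases eq_or_ne (1-x) 0 with hx | hx
    · simp [hx]
    · have h12 : (1:ℝ) - 1/2 = 1/2 := by norm_num
      rw [Real.log_div hx (ne_of_gt hc1'), h12, Real.log_div hx (by norm_num), l4, h2]; ring
  unfold klBer
  rw [hA, hB]
  ring

/-- monotonicity when on opposite sides of 1/2 -/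
lemma kl_half_le {x c : ℝ} (hc0 : 0 < c) (hc1 : c < 1)
    (hside : (x ≤ 1/2 ∧ 1/2 < c) ∨ (c < 1/2 ∧ 1/2 ≤ x)) :
    klBer x (1/2) ≤ klBer x c := by
  have hc1' : (0:ℝ) < 1 - c := by linarith
  rw [kl_decomp hc0 hc1]
  have e1 : Real.log (1/(2*c)) = -(Real.log 2 + Real.log c) := by
    rw [one_div, Real.log_inv, Real.log_mul two_ne_zero (ne_of_gt hc0)]
  have e2 : Real.log (1/(2*(1-c))) = -(Real.log 2 + Real.log (1-c)) := by
    rw [one_div, Real.log_inv, Real.log_mul two_ne_zero (ne_of_gt hc1')]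
  have hsum : Real.log c + Real.log (1-c) + 2 * Real.log 2 ≤ 0 := by
    have h4 : Real.log (c * (1-c) * 4) ≤ 0 := by
      apply Real.log_nonpos (by positivity)
      nlinarith [sq_nonneg (2*c - 1)]
    rw [Real.log_mul (ne_of_gt (mul_pos hc0 hc1')) (by norm_num),
      Real.log_mul (ne_of_gt hc0) (ne_of_gt hc1')] at h4
    have h42 : Real.log 4 = 2 * Real.log 2 := by
      rw [show (4:ℝ) = 2^2 by norm_num, Real.log_pow]; push_cast; ring
    linarith
  have hg : 0 ≤ x * Real.log (1/(2*c)) + (1-x) * Real.log (1/(2*(1-c))) := by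
    rw [e1, e2]
    rcases hside with ⟨hx, hcc⟩ | ⟨hcc, hx⟩
    · have hst : Real.log (1-c) ≤ Real.log c :=
        Real.log_le_log hc1' (by linarith)
      nlinarith [mul_nonneg (by linarith : (0:ℝ) ≤ 1/2 - x) (by linarith : (0:ℝ) ≤ Real.log c - Real.log (1-c))]
    · have hst : Real.log c ≤ Real.log (1-c) :=
        Real.log_le_log hc0 (by linarith)
      nlinarith [mul_nonneg (by linarith : (0:ℝ) ≤ x - 1/2) (by linarith : (0:ℝ) ≤ Real.log (1-c) - Real.log c)]
  linarith

lemma exp_nat_log {y : ℝ} (hy : 0 < y) (m : ℕ) : Real.exp (m * Real.log y) = y ^ m := by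
  rw [← Real.log_pow, Real.exp_log (by positivity)]

/-- binomial identity: `c^k (1-c)^(n-k) = exp(-(n·kl(x,c))) x^k (1-x)^(n-k)` for `x = k/n`. -/
lemma prod_identity {c : ℝ} (hc0 : 0 < c) (hc1 : c < 1) (n k : ℕ) (hn : 0 < n) (hk : k ≤ n) :
    c ^ k * (1-c) ^ (n-k)
      = Real.exp (-((n:ℝ) * klBer ((k:ℝ)/n) c))
        * (((k:ℝ)/n) ^ k * (1-(k:ℝ)/n) ^ (n-k)) := by
  have hc1' : (0:ℝ) < 1 - c := by linarith
  have hn0 : (n:ℝ) ≠ 0 := Nat.cast_ne_zero.mpr (by omega)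
  rcases Nat.eq_zero_or_pos k with hk0 | hkpos
  · subst hk0
    have hkl : klBer ((0:ℝ)/n) c = -Real.log (1-c) := by
      unfold klBer; simp
    simp only [Nat.cast_zero, hkl]
    rw [pow_zero, pow_zero, Nat.sub_zero]
    have : -((n:ℝ) * -Real.log (1-c)) = (n:ℝ) * Real.log (1-c) := by ring
    rw [this, exp_nat_log hc1' n]
    simp
  rcases eq_or_lt_of_le hk with hkn | hklt
  · subst hkn
    have hx1 : (k:ℝ)/k = 1 := div_self (Nat.cast_ne_zero.mpr (by omega))
    have hkl : klBer ((k:ℝ)/k) c = -Real.log c := by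
      unfold klBer; rw [hx1]; simp
    rw [hx1] at *
    rw [hkl, Nat.sub_self, pow_zero, pow_zero]
    have : -((k:ℝ) * -Real.log c) = (k:ℝ) * Real.log c := by ring
    rw [this, exp_nat_log hc0 k]
    simp
  · -- 0 < k < n
    set x : ℝ := (k:ℝ)/n with hxdef
    have hx0 : 0 < x := by positivity
    have hx1 : x < 1 := by
      rw [hxdef, div_lt_one (by positivity)]
      exact_mod_cast hklt
    have hx1' : (0:ℝ) < 1 - x := by linarith
    have hnk : ((n - k : ℕ) : ℝ) = (n:ℝ) - k := by
      rw [Nat.cast_sub hk]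
    have hsplit : (n:ℝ) * klBer x c
        = (k:ℝ) * Real.log (x/c) + ((n-k:ℕ):ℝ) * Real.log ((1-x)/(1-c)) := by
      unfold klBer
      rw [hnk]
      have h1 : (n:ℝ) * x = k := by rw [hxdef]; field_simp
      have h2 : (n:ℝ) * (1 - x) = (n:ℝ) - k := by
        have h1 : (n:ℝ) * x = k := by rw [hxdef]; field_simp
        linarith
      linear_combination Real.log (x/c) * h1 + Real.log ((1-x)/(1-c)) * h2
    rw [hsplit]
    rw [neg_add, Real.exp_add]
    have ha : Real.exp (-((k:ℝ) * Real.log (x/c))) = (c/x) ^ k := by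
      have : -((k:ℝ) * Real.log (x/c)) = (k:ℝ) * Real.log (c/x) := by
        rw [Real.log_div (ne_of_gt hx0) (ne_of_gt hc0), Real.log_div (ne_of_gt hc0) (ne_of_gt hx0)]
        ring
      rw [this, exp_nat_log (by positivity) k]
    have hb : Real.exp (-(((n-k:ℕ):ℝ) * Real.log ((1-x)/(1-c)))) = ((1-c)/(1-x)) ^ (n-k) := by
      have : -(((n-k:ℕ):ℝ) * Real.log ((1-x)/(1-c))) = ((n-k:ℕ):ℝ) * Real.log ((1-c)/(1-x)) := by
        rw [Real.log_div (ne_of_gt hx1') (ne_of_gt hc1'),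
          Real.log_div (ne_of_gt hc1') (ne_of_gt hx1')]
        ring
      rw [this, exp_nat_log (by positivity) (n-k)]
    rw [ha, hb]
    rw [div_pow c x k, div_pow (1-c) (1-x) (n-k)]
    rw [div_mul_div_comm, div_mul_cancel₀ _ (mul_ne_zero (pow_ne_zero _ (ne_of_gt hx0))
      (pow_ne_zero _ (ne_of_gt hx1')))]

/-- binomial coefficient bound: `C(n,k) x^k (1-x)^(n-k) ≤ 1` for `x ∈ [0,1]`. -/
lemma choose_bound {x : ℝ} (hx0 : 0 ≤ x) (hx1 : x ≤ 1) {n k : ℕ} (hk : k ≤ n) :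
    (n.choose k : ℝ) * (x ^ k * (1-x) ^ (n-k)) ≤ 1 := by
  have hx1' : (0:ℝ) ≤ 1 - x := by linarith
  have key : (1:ℝ) = ∑ j ∈ Finset.range (n+1), x ^ j * (1-x) ^ (n-j) * (n.choose j : ℝ) := by
    have := add_pow x (1-x) n
    rw [show x + (1-x) = 1 by ring, one_pow] at this
    exact this
  have single : x ^ k * (1-x) ^ (n-k) * (n.choose k : ℝ)
      ≤ ∑ j ∈ Finset.range (n+1), x ^ j * (1-x) ^ (n-j) * (n.choose j : ℝ) := by
    apply Finset.single_le_sum (f := fun j => x ^ j * (1-x) ^ (n-j) * (n.choose j : ℝ))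
    · intro j _; positivity
    · exact Finset.mem_range.mpr (by omega)
  rw [← key] at single
  linarith

/-- the per-string bound. -/
lemma per_string_bound {c α : ℝ} (hc0 : 0 < c) (hc1 : c < 1) (hc' : c ≠ 1/2)
    (hα0 : 0 < α) {n k : ℕ} (hn : 2 ≤ n) (hk : k ≤ n)
    (hcross : Real.log (2 * n / α) < (n:ℝ) * klBer ((k:ℝ)/n) (1/2))
    (hside : (decide ((1:ℝ)/2 < (k:ℝ)/n) ≠ decide ((1:ℝ)/2 < c))) :
    c ^ k * (1-c) ^ (n-k) ≤ α * wr n k := by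
  have hc1' : (0:ℝ) < 1 - c := by linarith
  have hnR : (0:ℝ) < (n:ℝ) := by exact_mod_cast (by omega : 0 < n)
  set x : ℝ := (k:ℝ)/n with hxdef
  have hx0 : 0 ≤ x := by positivity
  have hx1 : x ≤ 1 := by
    rw [hxdef, div_le_one (by positivity)]
    exact_mod_cast hk
  have hx1' : (0:ℝ) ≤ 1 - x := by linarith
  have hside' : (x ≤ 1/2 ∧ 1/2 < c) ∨ (c < 1/2 ∧ 1/2 ≤ x) := by
    by_cases h1 : (1:ℝ)/2 < x
    · have h2 : ¬ ((1:ℝ)/2 < c) := by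
        intro h2; apply hside; rw [decide_eq_true h1, decide_eq_true h2]
      right; exact ⟨lt_of_le_of_ne (not_lt.mp h2) hc', le_of_lt h1⟩
    · have h2 : (1:ℝ)/2 < c := by
        by_contra h2
        apply hside
        rw [decide_eq_false h1, decide_eq_false h2]
      left; exact ⟨not_lt.mp h1, h2⟩
  have hkl : klBer x (1/2) ≤ klBer x c := kl_half_le hc0 hc1 hside'
  have hB0 : 0 ≤ x ^ k * (1-x) ^ (n-k) := by positivity
  have step1 : c ^ k * (1-c) ^ (n-k)
      ≤ Real.exp (-((n:ℝ) * klBer x (1/2))) * (x ^ k * (1-x) ^ (n-k)) := by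
    rw [prod_identity hc0 hc1 n k (by omega) hk]
    apply mul_le_mul_of_nonneg_right _ hB0
    apply Real.exp_le_exp.mpr
    nlinarith [hkl]
  have step2 : Real.exp (-((n:ℝ) * klBer x (1/2))) ≤ α / (2*n) := by
    have hlog : -((n:ℝ) * klBer x (1/2)) ≤ Real.log (α / (2*n)) := by
      have hinv : Real.log (α / (2*n)) = - Real.log (2 * n / α) := by
        rw [← Real.log_inv]
        congr 1
        field_simp
      rw [hinv]
      linarith
    calc Real.exp (-((n:ℝ) * klBer x (1/2))) ≤ Real.exp (Real.log (α / (2*n))) :=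
          Real.exp_le_exp.mpr hlog
      _ = α / (2*n) := Real.exp_log (by positivity)
  have hcpos : (0:ℝ) < (n.choose k : ℝ) := Nat.cast_pos.mpr (Nat.choose_pos hk)
  have hchoose : x ^ k * (1-x) ^ (n-k) ≤ ((n.choose k : ℝ))⁻¹ := by
    rw [inv_eq_one_div, le_div_iff₀ hcpos]
    linarith [choose_bound hx0 hx1 hk]
  have hwr : wr n k = (((n:ℝ)+1) * (n.choose k : ℝ))⁻¹ := by
    unfold wr
    push_cast
    ring_nf
  calc c ^ k * (1-c) ^ (n-k)
      ≤ Real.exp (-((n:ℝ) * klBer x (1/2))) * (x ^ k * (1-x) ^ (n-k)) := step1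
    _ ≤ (α / (2*n)) * ((n.choose k : ℝ))⁻¹ := by
        apply mul_le_mul step2 hchoose hB0 (by positivity)
    _ ≤ α * wr n k := by
        rw [hwr, mul_inv, ← mul_assoc]
        apply mul_le_mul_of_nonneg_right _ (by positivity : (0:ℝ) ≤ ((n.choose k : ℝ))⁻¹)
        rw [div_eq_mul_inv]
        apply mul_le_mul_of_nonneg_left _ (le_of_lt hα0)
        apply inv_anti₀ (by positivity)
        have hn2 : (2:ℝ) ≤ (n:ℝ) := by exact_mod_cast hn
        linarith

open Classical in
/-- bad (error-causing) strings of length `n`. -/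
noncomputable def BadSet (c α : ℝ) (n : ℕ) : Finset (Fin n → Bool) :=
  Finset.univ.filter (fun v =>
    2 ≤ n ∧ (Real.log (2*n/α) < (n:ℝ) * klBer ((cnt v : ℝ)/n) (1/2)) ∧
    (∀ m (h : m < n), 2 ≤ m →
      ¬ (Real.log (2*m/α) < (m:ℝ) * klBer ((cnt (v ∘ Fin.castLE h.le) : ℝ)/m) (1/2))) ∧
    decide ((1:ℝ)/2 < (cnt v : ℝ)/n) ≠ decide ((1:ℝ)/2 < c))

lemma mem_BadSet {c α : ℝ} {n : ℕ} {v : Fin n → Bool} :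
    v ∈ BadSet c α n ↔
    (2 ≤ n ∧ (Real.log (2*n/α) < (n:ℝ) * klBer ((cnt v : ℝ)/n) (1/2)) ∧
    (∀ m (h : m < n), 2 ≤ m →
      ¬ (Real.log (2*m/α) < (m:ℝ) * klBer ((cnt (v ∘ Fin.castLE h.le) : ℝ)/m) (1/2))) ∧
    decide ((1:ℝ)/2 < (cnt v : ℝ)/n) ≠ decide ((1:ℝ)/2 < c)) := by
  simp [BadSet]

lemma BadSet_prefix_free (c α : ℝ) :
    ∀ m n (hmn : m < n) (v : Fin m → Bool) (w : Fin n → Bool),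
      v ∈ BadSet c α m → w ∈ BadSet c α n → w ∘ Fin.castLE hmn.le ≠ v := by
  intro m n hmn v w hv hw heq
  obtain ⟨hm2, hvcross, -, -⟩ := mem_BadSet.mp hv
  obtain ⟨-, -, hwmin, -⟩ := mem_BadSet.mp hw
  exact hwmin m hmn hm2 (by rw [heq]; exact hvcross)

section Bern

lemma bern_singleton_one {c : ℝ} : bern c {1} = ENNReal.ofReal c := by
  simp [bern, Measure.dirac_apply]

lemma bern_singleton_zero {c : ℝ} : bern c {0} = ENNReal.ofReal (1-c) := by
  simp [bern, Measure.dirac_apply]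

lemma bern_other {c : ℝ} : bern c ({0, 1} : Set ℝ)ᶜ = 0 := by
  simp [bern, Measure.dirac_apply, Set.indicator_apply]

end Bern

/-- extend a finite string to ℕ (1-indexed). -/
def vext {n : ℕ} (v : Fin n → Bool) (j : ℕ) : Bool :=
  if h : j - 1 < n then v ⟨j-1, h⟩ else false

noncomputable def bval (b : Bool) : ℝ := if b then 1 else 0

lemma sum_Icc_fin (f : ℕ → ℝ) (m : ℕ) :
    ∑ i ∈ Finset.Icc 1 m, f i = ∑ j : Fin m, f ((j:ℕ)+1) := by
  induction m with
  | zero => simp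
  | succ m ih =>
    rw [Finset.sum_Icc_succ_top (by omega), ih, Fin.sum_univ_castSucc]
    simp

lemma prod_Icc_fin (f : ℕ → ℝ≥0∞) (m : ℕ) :
    ∏ i ∈ Finset.Icc 1 m, f i = ∏ j : Fin m, f ((j:ℕ)+1) := by
  induction m with
  | zero => simp
  | succ m ih =>
    rw [Finset.prod_Icc_succ_top (by omega), ih, Fin.prod_univ_castSucc]
    simp

lemma cnt_cast {n : ℕ} (v : Fin n → Bool) :
    ((cnt v : ℝ)) = ∑ i : Fin n, (if v i then (1:ℝ) else 0) := by
  unfold cnt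
  push_cast
  apply Finset.sum_congr rfl
  intro i _
  split <;> simp


end ChernoffLemma2

open ChernoffLemma2

/-- Correctness of the Chernoff stopping rule (first part of Lemma 2): for i.i.d.
Bernoulli(c) observations, the probability that `τ < ∞` and the final decision
`𝟙(ĉ_τ > 1/2)` differs from `𝟙(c > 1/2)` is at most `α`. -/
theorem stmt_2 {Ω : Type*} [MeasurableSpace Ω] (P : Measure Ω) [IsProbabilityMeasure P]
    (c : ℝ) (hc : c ∈ Set.Ioo (0 : ℝ) 1) (hc' : c ≠ 1/2)
    (α : ℝ) (hα : α ∈ Set.Ioo (0 : ℝ) 1)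
    (X : ℕ → Ω → ℝ) (hmeas : ∀ n, Measurable (X n))
    (hindep : iIndepFun X P)
    (hdist : ∀ n, Measure.map (X n) P = bern c) :
    P {ω | ∃ n : ℕ, chernoffTau X α ω = (n : ℕ∞) ∧
        decide (1/2 < empMean X n ω) ≠ decide (1/2 < c)} ≤ ENNReal.ofReal α := by
  classical
  obtain ⟨hc0, hc1⟩ := hc
  obtain ⟨hα0, hα1⟩ := hα
  set E := {ω | ∃ n : ℕ, chernoffTau X α ω = (n : ℕ∞) ∧
      decide (1/2 < empMean X n ω) ≠ decide (1/2 < c)} with hE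
  set good : Set Ω := {ω | ∀ j, X j ω = 0 ∨ X j ω = 1} with hgood
  set Cell : (n : ℕ) → (Fin n → Bool) → Set Ω :=
    fun n v => ⋂ j ∈ Finset.Icc 1 n, X j ⁻¹' {bval (vext v j)} with hCell
  -- measure of preimages
  have hXval : ∀ (j : ℕ) (s : Set ℝ), MeasurableSet s → P (X j ⁻¹' s) = bern c s := by
    intro j s hs
    rw [← hdist j, Measure.map_apply (hmeas j) hs]
  -- good has full measure
  have hgoodc : P goodᶜ = 0 := by
    have : goodᶜ = ⋃ j, X j ⁻¹' ({0, 1} : Set ℝ)ᶜ := by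
      ext ω
      simp [hgood, Set.mem_iUnion, not_forall]
    rw [this]
    apply measure_iUnion_null
    intro j
    rw [hXval j _ (((Set.finite_singleton (1:ℝ)).insert 0).measurableSet.compl)]
    exact bern_other
  -- probability of a cell
  have hcell_prob : ∀ (n : ℕ) (v : Fin n → Bool),
      P (Cell n v) = ENNReal.ofReal (c ^ cnt v * (1-c) ^ (n - cnt v)) := by
    intro n v
    have hprod : P (Cell n v) = ∏ j ∈ Finset.Icc 1 n, P (X j ⁻¹' {bval (vext v j)}) := by
      refine hindep.meas_biInter (S := Finset.Icc 1 n) ?_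
      intro j _
      exact ⟨{bval (vext v j)}, measurableSet_singleton _, rfl⟩
    rw [hprod]
    have hfac : ∀ j, P (X j ⁻¹' {bval (vext v j)})
        = (if vext v j then ENNReal.ofReal c else ENNReal.ofReal (1-c)) := by
      intro j
      cases hb : vext v j
      · simp only [if_neg Bool.false_ne_true]
        rw [hXval j _ (measurableSet_singleton _)]
        have : bval false = 0 := rfl
        rw [hb] at *
        simp [bval, bern_singleton_zero]
      · simp only [if_pos rfl]
        rw [hXval j _ (measurableSet_singleton _)]
        simp [bval, bern_singleton_one]
    calc ∏ j ∈ Finset.Icc 1 n, P (X j ⁻¹' {bval (vext v j)})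
        = ∏ j ∈ Finset.Icc 1 n,
            (if vext v j then ENNReal.ofReal c else ENNReal.ofReal (1-c)) :=
          Finset.prod_congr rfl (fun j _ => hfac j)
      _ = ∏ i : Fin n, (if vext v ((i:ℕ)+1) then ENNReal.ofReal c else ENNReal.ofReal (1-c)) :=
          prod_Icc_fin _ n
      _ = ∏ i : Fin n, (if v i then ENNReal.ofReal c else ENNReal.ofReal (1-c)) := by
          apply Finset.prod_congr rfl
          intro i _
          have : vext v ((i:ℕ)+1) = v i := by
            unfold vext
            have h1 : (i:ℕ)+1-1 < n := by omega
            rw [dif_pos h1]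
            have h2 : (⟨(i:ℕ)+1-1, h1⟩ : Fin n) = i := Fin.ext (by simp)
            rw [h2]
          rw [this]
      _ = ENNReal.ofReal (c ^ cnt v * (1-c) ^ (n - cnt v)) := by
          rw [← Finset.prod_filter_mul_prod_filter_not Finset.univ (fun i => v i = true)]
          have hcard : (Finset.univ.filter (fun i => v i = true)).card = cnt v := by
            unfold cnt
            rw [Finset.card_filter]
          have hcard' : (Finset.univ.filter (fun i => ¬ (v i = true))).card = n - cnt v := by
            have hh := Finset.card_filter_add_card_filter_not
              (s := (Finset.univ : Finset (Fin n))) (p := fun i => v i = true)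
            simp only [Finset.card_univ, Fintype.card_fin] at hh
            omega
          have h1 : ∏ i ∈ Finset.univ.filter (fun i => v i = true),
              (if v i then ENNReal.ofReal c else ENNReal.ofReal (1-c))
              = ENNReal.ofReal c ^ cnt v := by
            rw [Finset.prod_congr rfl
              (g := fun _ => ENNReal.ofReal c)
              (fun i hi => by simp [(Finset.mem_filter.mp hi).2]),
              Finset.prod_const, hcard]
          have h2 : ∏ i ∈ Finset.univ.filter (fun i => ¬ (v i = true)),
              (if v i then ENNReal.ofReal c else ENNReal.ofReal (1-c))
              = ENNReal.ofReal (1-c) ^ (n - cnt v) := by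
            rw [Finset.prod_congr rfl
              (g := fun _ => ENNReal.ofReal (1-c))
              (fun i hi => by simp [(Finset.mem_filter.mp hi).2]),
              Finset.prod_const, hcard']
          rw [h1, h2, ← ENNReal.ofReal_pow hc0.le, ← ENNReal.ofReal_pow (by linarith : (0:ℝ) ≤ 1-c),
            ← ENNReal.ofReal_mul (by positivity)]
  -- inclusion of the error event into the union of bad cells
  have hincl : E ⊆ goodᶜ ∪ ⋃ (n : ℕ), ⋃ (v ∈ BadSet c α n), Cell n v := by
    intro ω hω
    by_cases hg : ω ∈ good
    swap
    · exact Or.inl hg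
    right
    obtain ⟨n, hτ, hwrong⟩ := hω
    set v : Fin n → Bool := fun i => decide (X ((i:ℕ)+1) ω = 1) with hv
    -- values of X along the string
    have hval : ∀ j : ℕ, 1 ≤ j → j ≤ n → X j ω = bval (vext v j) := by
      intro j hj1 hjn
      have h1 : j - 1 < n := by omega
      have h2 : vext v j = v ⟨j-1, h1⟩ := by unfold vext; rw [dif_pos h1]
      have h3 : (⟨j-1, h1⟩ : Fin n) = ⟨j-1, h1⟩ := rfl
      rw [h2]
      have hj' : (((⟨j-1, h1⟩ : Fin n) : ℕ)) + 1 = j := by simp; omega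
      rcases hg j with h0 | h1'
      · have : v ⟨j-1, h1⟩ = false := by
          rw [hv]
          simp only []
          apply decide_eq_false
          rw [hj', h0]
          norm_num
        rw [this, h0]
        rfl
      · have : v ⟨j-1, h1⟩ = true := by
          rw [hv]
          simp only []
          apply decide_eq_true
          rw [hj', h1']
        rw [this, h1']
        rfl
    -- empirical means along the string
    have hemp : ∀ (m : ℕ), 1 ≤ m → ∀ (hmn : m ≤ n),
        empMean X m ω = (cnt (v ∘ Fin.castLE hmn) : ℝ) / m := by
      intro m hm1 hmn
      unfold empMean
      rw [sum_Icc_fin (fun i => X i ω) m]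
      have : ∀ j : Fin m, X ((j:ℕ)+1) ω = (if (v ∘ Fin.castLE hmn) j then (1:ℝ) else 0) := by
        intro j
        rw [hval ((j:ℕ)+1) (by omega) (by omega : (j:ℕ)+1 ≤ n)]
        have h1 : (j:ℕ)+1-1 < n := by omega
        have h2 : vext v ((j:ℕ)+1) = v ⟨(j:ℕ)+1-1, h1⟩ := by unfold vext; rw [dif_pos h1]
        have h3 : (⟨(j:ℕ)+1-1, h1⟩ : Fin n) = Fin.castLE hmn j := Fin.ext (by simp)
        rw [h2, h3]
        cases hb : v (Fin.castLE hmn j) <;> simp [bval, Function.comp, hb]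
      rw [Finset.sum_congr rfl (fun j _ => this j), ← cnt_cast]
      ring
    -- analyse the stopping time
    have hne : {t : ℕ∞ | ∃ n' : ℕ, t = (n' : ℕ∞) ∧ 2 ≤ n' ∧
        Real.log (2 * n' / α) < (n' : ℝ) * klBer (empMean X n' ω) (1/2)}.Nonempty := by
      by_contra h
      rw [Set.not_nonempty_iff_eq_empty] at h
      unfold chernoffTau at hτ
      rw [h, sInf_empty] at hτ
      exact (by simp : (⊤:ℕ∞) ≠ (n:ℕ∞)) hτ
    have hmem := csInf_mem hne
    unfold chernoffTau at hτ
    rw [hτ] at hmem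
    obtain ⟨n', hn', h2n, hcrossn⟩ := hmem
    have hnn' : n = n' := by exact_mod_cast hn'
    subst hnn'
    have hmin : ∀ m : ℕ, 2 ≤ m → m < n →
        ¬ (Real.log (2 * m / α) < (m : ℝ) * klBer (empMean X m ω) (1/2)) := by
      intro m h2m hmn hcross
      have hmS : (m : ℕ∞) ∈ {t : ℕ∞ | ∃ n' : ℕ, t = (n' : ℕ∞) ∧ 2 ≤ n' ∧
          Real.log (2 * n' / α) < (n' : ℝ) * klBer (empMean X n' ω) (1/2)} :=
        ⟨m, rfl, h2m, hcross⟩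
      have := sInf_le hmS
      rw [hτ] at this
      have : n ≤ m := by exact_mod_cast this
      omega
    -- the string is bad
    have hvrefl : v ∘ Fin.castLE (le_refl n) = v := by
      funext i
      simp only [Function.comp_apply]
      congr 1
    have hBad : v ∈ BadSet c α n := by
      rw [mem_BadSet]
      refine ⟨h2n, ?_, ?_, ?_⟩
      · have := hemp n (by omega) (le_refl n)
        rw [hvrefl] at this
        rw [← this]
        exact hcrossn
      · intro m hmn h2m hcross
        apply hmin m h2m hmn
        rw [hemp m (by omega) hmn.le]
        exact hcross
      · have := hemp n (by omega) (le_refl n)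
        rw [hvrefl] at this
        rw [← this]
        exact hwrong
    -- ω is in the cell
    have hcell : ω ∈ Cell n v := by
      rw [hCell]
      simp only [Set.mem_iInter, Set.mem_preimage, Set.mem_singleton_iff]
      intro j hj
      rw [Finset.mem_Icc] at hj
      exact hval j hj.1 hj.2
    exact Set.mem_iUnion.mpr ⟨n, Set.mem_iUnion.mpr ⟨v, Set.mem_iUnion.mpr ⟨hBad, hcell⟩⟩⟩
  -- final computation
  have hwgt00 : wgt 0 0 = 1 := by
    unfold wgt wr
    norm_num
  have hkraft_tsum : ∑' (n : ℕ), (∑ v ∈ BadSet c α n, wgt n (cnt v)) ≤ 1 := by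
    apply Summable.tsum_le_of_sum_le ENNReal.summable
    intro F
    set N : ℕ := F.sup id with hN
    calc ∑ n ∈ F, ∑ v ∈ BadSet c α n, wgt n (cnt v)
        ≤ ∑ n ∈ Finset.range (N+1), ∑ v ∈ BadSet c α n, wgt n (cnt v) := by
          apply Finset.sum_le_sum_of_subset
          intro n hn
          rw [Finset.mem_range]
          have : n ≤ N := Finset.le_sup (f := id) hn
          omega
      _ ≤ wgt 0 0 := kraft (N) _ (BadSet_prefix_free c α)
      _ = 1 := hwgt00
  calc P E ≤ P (goodᶜ ∪ ⋃ (n : ℕ), ⋃ (v ∈ BadSet c α n), Cell n v) := measure_mono hincl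
    _ ≤ P goodᶜ + P (⋃ (n : ℕ), ⋃ (v ∈ BadSet c α n), Cell n v) := measure_union_le _ _
    _ = P (⋃ (n : ℕ), ⋃ (v ∈ BadSet c α n), Cell n v) := by rw [hgoodc, zero_add]
    _ ≤ ∑' (n : ℕ), P (⋃ (v ∈ BadSet c α n), Cell n v) := measure_iUnion_le _
    _ ≤ ∑' (n : ℕ), ∑ v ∈ BadSet c α n, P (Cell n v) := by
        apply ENNReal.tsum_le_tsum
        intro n
        exact measure_biUnion_finset_le _ _
    _ ≤ ∑' (n : ℕ), ∑ v ∈ BadSet c α n, ENNReal.ofReal α * wgt n (cnt v) := by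
        apply ENNReal.tsum_le_tsum
        intro n
        apply Finset.sum_le_sum
        intro v hvB
        obtain ⟨h2n, hcross, -, hside⟩ := mem_BadSet.mp hvB
        rw [hcell_prob n v]
        have hps := per_string_bound hc0 hc1 hc' hα0 h2n (cnt_le v) hcross hside
        calc ENNReal.ofReal (c ^ cnt v * (1-c) ^ (n - cnt v))
            ≤ ENNReal.ofReal (α * wr n (cnt v)) := ENNReal.ofReal_le_ofReal hps
          _ = ENNReal.ofReal α * wgt n (cnt v) := by
              unfold wgt
              rw [ENNReal.ofReal_mul hα0.le]
    _ = ENNReal.ofReal α * ∑' (n : ℕ), ∑ v ∈ BadSet c α n, wgt n (cnt v) := by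
        rw [← ENNReal.tsum_mul_left]
        congr 1
        funext n
        rw [Finset.mul_sum]
    _ ≤ ENNReal.ofReal α * 1 := by
        apply mul_le_mul_right hkraft_tsum
    _ = ENNReal.ofReal α := mul_one _
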